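/- Let F(z) = c·exp(Σ_{i=1}^p a_i z^i) with c > 0, a_i ≥ 0, a_p > 0, gcd{j : a_j ≠ 0} = 1, and fix integers k ≥ 1 and 1 ≤ m < k. With e^m_n = [z^n]F(z)^m, the ratio e^m_n / e^{m+1}_n → 0 as n → ∞. -/

import Mathlib

open Filter Polynomial Finset

private lemma contDiff_polyEval (P : Polynomial ℝ) : ContDiff ℝ (⊤ : ℕ∞) fun x => P.eval x := by
  induction P using Polynomial.induction_on' with
  | add p q hp hq => simpa [Polynomial.eval_add] using hp.add hq
  | monomial n a =>
      simpa [Polynomial.eval_monomial] using contDiff_const.mul (contDiff_id.pow n)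

private lemma iteratedDeriv_polyEval (P : Polynomial ℝ) (n : ℕ) (x : ℝ) :
    iteratedDeriv n (fun x => P.eval x) x = (Polynomial.derivative^[n] P).eval x := by
  induction n generalizing P with
  | zero => simp
  | succ n ih =>
      have h : deriv (fun x : ℝ => P.eval x) = fun x => (Polynomial.derivative P).eval x := by
        funext y; exact P.deriv
      rw [iteratedDeriv_succ', h, ih, Function.iterate_succ_apply]

private lemma my_iteratedDeriv_mul (f g : ℝ → ℝ) (hf : ContDiff ℝ (⊤ : ℕ∞) f)
    (hg : ContDiff ℝ (⊤ : ℕ∞) g) :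
    ∀ (n : ℕ) (x : ℝ), iteratedDeriv n (fun y => f y * g y) x =
      ∑ i ∈ Finset.range (n + 1),
        (n.choose i : ℝ) * (iteratedDeriv i f x * iteratedDeriv (n - i) g x) := by
  intro n
  induction n with
  | zero => intro x; simp
  | succ n ih =>
    intro x
    have hdf : ∀ i : ℕ, Differentiable ℝ (iteratedDeriv i f) := fun i => by
      rw [iteratedDeriv_eq_iterate]
      exact (hf.iterate_deriv i).differentiable (by simp)
    have hdg : ∀ i : ℕ, Differentiable ℝ (iteratedDeriv i g) := fun i => by
      rw [iteratedDeriv_eq_iterate]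
      exact (hg.iterate_deriv i).differentiable (by simp)
    have h1 : iteratedDeriv (n + 1) (fun y => f y * g y) x =
        deriv (fun y => ∑ i ∈ Finset.range (n + 1),
          (n.choose i : ℝ) * (iteratedDeriv i f y * iteratedDeriv (n - i) g y)) x := by
      rw [iteratedDeriv_succ]
      congr 1
      funext y
      exact ih y
    rw [h1, deriv_fun_sum (fun i _ => show DifferentiableAt ℝ (fun y => (n.choose i : ℝ) *
        (iteratedDeriv i f y * iteratedDeriv (n - i) g y)) x from
      (((hdf i).differentiableAt.mul (hdg (n - i)).differentiableAt).const_mul _))]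
    have h2 : ∀ i ∈ Finset.range (n + 1),
        deriv (fun y => (n.choose i : ℝ) *
            (iteratedDeriv i f y * iteratedDeriv (n - i) g y)) x =
          (n.choose i : ℝ) * (iteratedDeriv i f x * iteratedDeriv (n + 1 - i) g x) +
          (n.choose i : ℝ) * (iteratedDeriv (i + 1) f x * iteratedDeriv (n - i) g x) := by
      intro i hi
      have hi' : i ≤ n := Nat.lt_succ_iff.mp (Finset.mem_range.mp hi)
      rw [deriv_const_mul _ (show DifferentiableAt ℝ
          (fun y => iteratedDeriv i f y * iteratedDeriv (n - i) g y) x from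
          (hdf i).differentiableAt.mul (hdg (n - i)).differentiableAt),
        deriv_fun_mul (hdf i).differentiableAt (hdg (n - i)).differentiableAt,
        ← iteratedDeriv_succ, ← iteratedDeriv_succ]
      have h3 : n - i + 1 = n + 1 - i := by omega
      rw [h3]
      ring
    rw [Finset.sum_congr rfl h2, Finset.sum_add_distrib]
    exact (Finset.sum_choose_succ_mul
      (fun i j => iteratedDeriv i f x * iteratedDeriv j g x) n).symm

/-- Let `F(z) = c·exp(Σ_{i=1}^p a_i z^i)` with `c > 0`, `a_i ≥ 0`, `a_p > 0`, and
`gcd{j : a_j ≠ 0} = 1`, and fix `k ≥ 1`, `1 ≤ m < k`. With `e^m_n = [z^n] F(z)^m`, the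
ratio `e^m_n / e^{m+1}_n` tends to `0` as `n → ∞`. -/
theorem stmt_18 (p : ℕ) (hp : 0 < p) (c : ℝ) (hc : 0 < c) (P : Polynomial ℝ)
    (hdeg : P.natDegree = p) (hnonneg : ∀ i, 0 ≤ P.coeff i) (h0 : P.coeff 0 = 0)
    (hap : 0 < P.coeff p) (hgcd : P.support.gcd id = 1)
    (k m : ℕ) (hk : 1 ≤ k) (hm : 1 ≤ m) (hmk : m < k) (e : ℕ → ℕ → ℝ)
    (he : ∀ q n : ℕ, e q n =
      iteratedDeriv n (fun x => (c * Real.exp (P.eval x)) ^ q) 0 / n.factorial) :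
    Tendsto (fun n : ℕ => e m n / e (m + 1) n) atTop (nhds 0) := by
  set D : ℕ → ℕ → ℝ :=
    fun q n => iteratedDeriv n (fun x => Real.exp ((q : ℝ) * P.eval x)) 0 with hD
  have hsm : ∀ q : ℕ, ContDiff ℝ (⊤ : ℕ∞) (fun x => Real.exp ((q : ℝ) * P.eval x)) :=
    fun q => Real.contDiff_exp.comp (contDiff_const.mul (contDiff_polyEval P))
  have hderiv : ∀ q : ℕ, deriv (fun x => Real.exp ((q : ℝ) * P.eval x)) =
      fun x => ((Polynomial.C (q : ℝ) * Polynomial.derivative P).eval x) *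
        Real.exp ((q : ℝ) * P.eval x) := by
    intro q; funext y
    have h1 : HasDerivAt (fun x : ℝ => (q : ℝ) * P.eval x)
        ((q : ℝ) * (Polynomial.derivative P).eval y) y :=
      (P.hasDerivAt y).const_mul _
    rw [h1.exp.deriv]
    simp [mul_comm]
  set b : ℕ → ℝ := fun i => (i.factorial : ℝ) * (P.coeff (i + 1) * ((i : ℝ) + 1)) with hbdef
  have hbnonneg : ∀ i, 0 ≤ b i := fun i =>
    mul_nonneg (by positivity) (mul_nonneg (hnonneg _) (by positivity))
  have hbzero : ∀ i, p ≤ i → b i = 0 := by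
    intro i hi
    have h1 : P.coeff (i + 1) = 0 :=
      Polynomial.coeff_eq_zero_of_natDegree_lt (by omega)
    simp [hbdef, h1]
  have hQ : ∀ (q i : ℕ), iteratedDeriv i
      (fun x => (Polynomial.C (q : ℝ) * Polynomial.derivative P).eval x) 0 = (q : ℝ) * b i := by
    intro q i
    rw [iteratedDeriv_polyEval, ← Polynomial.coeff_zero_eq_eval_zero,
      Polynomial.coeff_iterate_derivative]
    simp only [Nat.zero_add, Polynomial.coeff_C_mul, Polynomial.coeff_derivative,
      smul_eq_mul, nsmul_eq_mul, Nat.descFactorial_self]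
    push_cast [hbdef]
    ring
  have hrec : ∀ (q n : ℕ), D q (n + 1) = ∑ i ∈ Finset.range (n + 1),
      (n.choose i : ℝ) * (((q : ℝ) * b i) * D q (n - i)) := by
    intro q n
    have h1 : D q (n + 1) = iteratedDeriv n
        (fun x => (Polynomial.C (q : ℝ) * Polynomial.derivative P).eval x *
          Real.exp ((q : ℝ) * P.eval x)) 0 := by
      show iteratedDeriv (n + 1) (fun x => Real.exp ((q : ℝ) * P.eval x)) 0 = _
      rw [iteratedDeriv_succ', hderiv q]
    rw [h1, my_iteratedDeriv_mul _ _ (contDiff_polyEval _) (hsm q)]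
    refine Finset.sum_congr rfl fun i _ => ?_
    rw [hQ q i]
  have hev0 : P.eval 0 = 0 := by
    rw [← Polynomial.coeff_zero_eq_eval_zero, h0]
  have hD0 : ∀ q : ℕ, D q 0 = 1 := by
    intro q
    simp [hD, hev0]
  have hDnonneg : ∀ (q n : ℕ), 0 ≤ D q n := by
    intro q n
    induction n using Nat.strong_induction_on with
    | _ n ih =>
      match n with
      | 0 => rw [hD0]; norm_num
      | n + 1 =>
        rw [hrec]
        refine Finset.sum_nonneg fun i hi => ?_
        exact mul_nonneg (by positivity)
          (mul_nonneg (mul_nonneg (by positivity) (hbnonneg i)) (ih (n - i) (by omega)))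
  set r : ℝ := (m : ℝ) / ((m : ℝ) + 1) with hrdef
  have hm1 : ((m : ℝ) + 1) ≠ 0 := by positivity
  have hr0 : 0 ≤ r := by positivity
  have hr1 : r < 1 := by
    rw [hrdef, div_lt_one (by positivity)]
    linarith
  set N : ℕ → ℕ := fun n => (n + p - 1) / p with hNdef
  have key_eq : ∀ (a : ℕ) (x y : ℝ),
      (m : ℝ) * x * (r ^ a * y) = r ^ (a + 1) * (((m : ℝ) + 1) * x * y) := by
    intro a x y
    have h : r * ((m : ℝ) + 1) = (m : ℝ) := by
      rw [hrdef, div_mul_cancel₀ _ hm1]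
    calc (m : ℝ) * x * (r ^ a * y) = (r * ((m : ℝ) + 1)) * x * (r ^ a * y) := by rw [h]
      _ = r ^ (a + 1) * (((m : ℝ) + 1) * x * y) := by ring
  have hkey : ∀ n, D m n ≤ r ^ (N n) * D (m + 1) n := by
    intro n
    induction n using Nat.strong_induction_on with
    | _ n ih =>
      match n with
      | 0 =>
        have hN0 : N 0 = 0 := by
          simp only [hNdef]
          exact Nat.div_eq_of_lt (by omega)
        rw [hN0, hD0, hD0, pow_zero, one_mul]
      | j + 1 =>
        rw [hrec, hrec, Finset.mul_sum]
        refine Finset.sum_le_sum fun i hi => ?_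
        have hij : i ≤ j := Nat.lt_succ_iff.mp (Finset.mem_range.mp hi)
        have hDnn := hDnonneg (m + 1) (j - i)
        have hbnn := hbnonneg i
        have hchoose : (0 : ℝ) ≤ (j.choose i : ℝ) := by positivity
        by_cases hbi : b i = 0
        · simp only [hbi, mul_zero, zero_mul]
          simp
        · have hip : i < p := by
            by_contra h
            exact hbi (hbzero i (by omega))
          have hIH := ih (j - i) (by omega)
          have hNle : N (j + 1) ≤ N (j - i) + 1 := by
            have h1 : N (j - i) + 1 = (j - i + p - 1 + p) / p := by
              simp only [hNdef]
              rw [Nat.add_div_right _ hp]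
            have h2 : N (j + 1) = (j + 1 + p - 1) / p := by simp only [hNdef]
            rw [h1, h2]
            exact Nat.div_le_div_right (by omega)
          have hrpow : r ^ (N (j - i) + 1) ≤ r ^ (N (j + 1)) :=
            pow_le_pow_of_le_one hr0 hr1.le hNle
          have step1 : ((m : ℝ) * b i) * D m (j - i) ≤
              r ^ (N (j + 1)) * (((m : ℝ) + 1) * b i * D (m + 1) (j - i)) := by
            calc ((m : ℝ) * b i) * D m (j - i)
                ≤ ((m : ℝ) * b i) * (r ^ (N (j - i)) * D (m + 1) (j - i)) :=
                  mul_le_mul_of_nonneg_left hIH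
                    (mul_nonneg (Nat.cast_nonneg m) hbnn)
              _ = r ^ (N (j - i) + 1) * (((m : ℝ) + 1) * b i * D (m + 1) (j - i)) :=
                  key_eq _ _ _
              _ ≤ r ^ (N (j + 1)) * (((m : ℝ) + 1) * b i * D (m + 1) (j - i)) :=
                  mul_le_mul_of_nonneg_right hrpow
                    (mul_nonneg (mul_nonneg (by positivity) hbnn) hDnn)
          calc (j.choose i : ℝ) * (((m : ℝ) * b i) * D m (j - i))
              ≤ (j.choose i : ℝ) * (r ^ (N (j + 1)) *
                (((m : ℝ) + 1) * b i * D (m + 1) (j - i))) :=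
                mul_le_mul_of_nonneg_left step1 hchoose
            _ = r ^ (N (j + 1)) * ((j.choose i : ℝ) *
                ((((m + 1 : ℕ) : ℝ)) * b i * D (m + 1) (j - i))) := by push_cast; ring
  have heD : ∀ q n : ℕ, e q n = c ^ q * D q n / n.factorial := by
    intro q n
    rw [he]
    have hfun : (fun x => (c * Real.exp (P.eval x)) ^ q) =
        fun x => c ^ q * Real.exp ((q : ℝ) * P.eval x) := by
      funext x
      rw [mul_pow, ← Real.exp_nat_mul]
    have hcm : iteratedDeriv n (fun x => c ^ q * Real.exp ((q : ℝ) * P.eval x)) 0 =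
        c ^ q * iteratedDeriv n (fun x => Real.exp ((q : ℝ) * P.eval x)) 0 := by
      rw [← iteratedDerivWithin_univ, ← iteratedDerivWithin_univ]
      exact iteratedDerivWithin_const_mul (h := uniqueDiffOn_univ) (hx := Set.mem_univ 0)
        (c ^ q) (((hsm q).contDiffWithinAt).of_le (by exact_mod_cast le_top))
    rw [hfun, hcm]
  have hratio_nonneg : ∀ n, 0 ≤ e m n / e (m + 1) n := by
    intro n
    have h1 : 0 ≤ e m n := by
      rw [heD]
      exact div_nonneg (mul_nonneg (by positivity) (hDnonneg m n)) (by positivity)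
    have h2 : 0 ≤ e (m + 1) n := by
      rw [heD]
      exact div_nonneg (mul_nonneg (by positivity) (hDnonneg (m + 1) n)) (by positivity)
    exact div_nonneg h1 h2
  have hratio_le : ∀ n, e m n / e (m + 1) n ≤ (1 / c) * r ^ (N n) := by
    intro n
    have hfac : (0 : ℝ) < (n.factorial : ℝ) := by positivity
    by_cases hz : D (m + 1) n = 0
    · rw [heD, heD, hz]
      simp only [mul_zero, zero_div, div_zero]
      exact mul_nonneg (by positivity) (pow_nonneg hr0 _)
    · have hDpos : 0 < D (m + 1) n := lt_of_le_of_ne (hDnonneg (m + 1) n) (Ne.symm hz)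
      have hden : 0 < e (m + 1) n := by
        rw [heD]
        positivity
      have hstep : c ^ m * D m n ≤ (1 / c * r ^ N n) * (c ^ (m + 1) * D (m + 1) n) := by
        have h2 : (1 / c * r ^ N n) * (c ^ (m + 1) * D (m + 1) n) =
            c ^ m * (r ^ N n * D (m + 1) n) := by
          rw [pow_succ]
          field_simp
        rw [h2]
        exact mul_le_mul_of_nonneg_left (hkey n) (by positivity)
      rw [div_le_iff₀ hden, heD, heD, ← mul_div_assoc]
      exact (div_le_div_iff_of_pos_right hfac).mpr hstep
  have hbound : Tendsto (fun n : ℕ => (1 / c) * r ^ (N n)) atTop (nhds 0) := by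
    have hNtop : Tendsto N atTop atTop := by
      refine tendsto_atTop_atTop.2 fun B => ⟨B * p, fun n hn => ?_⟩
      have h1 : B * p ≤ n + p - 1 := le_trans hn (by omega)
      simp only [hNdef]
      exact (Nat.le_div_iff_mul_le hp).2 h1
    have h1 : Tendsto (fun n : ℕ => r ^ (N n)) atTop (nhds 0) :=
      (tendsto_pow_atTop_nhds_zero_of_lt_one hr0 hr1).comp hNtop
    simpa using h1.const_mul (1 / c)
  exact tendsto_of_tendsto_of_tendsto_of_le_of_le tendsto_const_nhds hbound
    hratio_nonneg hratio_le
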